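/- arXiv:1508.02592 — 2 statements merged into one kernel-verified Lean document; each statement's English description precedes it below -/
import Mathlib

section
/- Let φ̃ : ℝ × [0,π] × S² → ℝ be continuous, and suppose there are constants C⁺ and C⁻ such that φ̃(π, 0, ω) = C⁺ and φ̃(−π, 0, ω) = C⁻ for all ω ∈ S² (continuity at the future and past timelike infinity points i⁺ and i⁻ of the Einstein cylinder). Define φ(t,r,ω) = Ω(t,r) φ̃(τ(t,r), ζ(t,r), ω) on ℝ × (0,∞) × S². Then for every fixed r > 0 and ω ∈ S²: lim_{t→+∞} t² φ(t, r, ω) = 2C⁺ and lim_{t→−∞} t² φ(t, r, ω) = 2C⁻. In particular φ decays like 1/t² along the integral lines of ∂_t. -/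
open Real Filter

/-- Compactified time coordinate `τ(t,r) = arctan(t−r) + arctan(t+r)`. -/
noncomputable def tauC (t r : ℝ) : ℝ := arctan (t - r) + arctan (t + r)

/-- Compactified space coordinate `ζ(t,r) = arctan(t+r) − arctan(t−r)`. -/
noncomputable def zetaC (t r : ℝ) : ℝ := arctan (t + r) - arctan (t - r)

/-- Conformal factor `Ω(t,r) = 2/√((1+(t−r)²)(1+(t+r)²))`. -/
noncomputable def OmegaC (t r : ℝ) : ℝ :=
  2 / Real.sqrt ((1 + (t - r) ^ 2) * (1 + (t + r) ^ 2))


lemma zeta_mem (t r : ℝ) (hr : 0 ≤ r) : zetaC t r ∈ Set.Icc 0 π := by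
  have h1 := Real.arctan_lt_pi_div_two (t + r)
  have h2 := Real.neg_pi_div_two_lt_arctan (t - r)
  have h3 : arctan (t - r) ≤ arctan (t + r) :=
    Real.arctan_strictMono.monotone (by linarith)
  constructor <;> simp [zetaC] <;> linarith

lemma tau_top (r : ℝ) : Tendsto (fun t => tauC t r) atTop (nhds π) := by
  have h : ∀ c : ℝ, Tendsto (fun t : ℝ => arctan (t + c)) atTop (nhds (π/2)) := by
    intro c
    exact (Real.tendsto_arctan_atTop.mono_right nhdsWithin_le_nhds).comp
      (tendsto_atTop_add_const_right _ c tendsto_id)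
  have := (h (-r)).add (h r)
  simp only [← sub_eq_add_neg] at this
  have heq : π/2 + π/2 = π := by ring
  rw [heq] at this
  exact this.congr fun t => by simp [tauC]

lemma zeta_top (r : ℝ) : Tendsto (fun t => zetaC t r) atTop (nhds 0) := by
  have h : ∀ c : ℝ, Tendsto (fun t : ℝ => arctan (t + c)) atTop (nhds (π/2)) := by
    intro c
    exact (Real.tendsto_arctan_atTop.mono_right nhdsWithin_le_nhds).comp
      (tendsto_atTop_add_const_right _ c tendsto_id)
  have := (h r).sub (h (-r))
  simp only [← sub_eq_add_neg, sub_self] at this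
  exact this

lemma tau_bot (r : ℝ) : Tendsto (fun t => tauC t r) atBot (nhds (-π)) := by
  have h : ∀ c : ℝ, Tendsto (fun t : ℝ => arctan (t + c)) atBot (nhds (-(π/2))) := by
    intro c
    exact (Real.tendsto_arctan_atBot.mono_right nhdsWithin_le_nhds).comp
      (tendsto_atBot_add_const_right _ c tendsto_id)
  have := (h (-r)).add (h r)
  simp only [← sub_eq_add_neg] at this
  have heq : -(π/2) - π/2 = -π := by ring
  rw [heq] at this
  exact this.congr fun t => by simp [tauC]

lemma zeta_bot (r : ℝ) : Tendsto (fun t => zetaC t r) atBot (nhds 0) := by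
  have h : ∀ c : ℝ, Tendsto (fun t : ℝ => arctan (t + c)) atBot (nhds (-(π/2))) := by
    intro c
    exact (Real.tendsto_arctan_atBot.mono_right nhdsWithin_le_nhds).comp
      (tendsto_atBot_add_const_right _ c tendsto_id)
  have := (h r).sub (h (-r))
  simp only [← sub_eq_add_neg, sub_self] at this
  exact this

lemma omega_lim (r : ℝ) (l : Filter ℝ) (h : Tendsto (fun t : ℝ => t⁻¹) l (nhds 0))
    (h0 : ∀ᶠ t in l, t ≠ 0) :
    Tendsto (fun t => t ^ 2 * OmegaC t r) l (nhds 2) := by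
  set g : ℝ → ℝ := fun x => (x ^ 2 + (1 - r * x) ^ 2) * (x ^ 2 + (1 + r * x) ^ 2) with hg
  have hgc : Tendsto g (nhds 0) (nhds 1) := by
    have : Continuous g := by fun_prop
    have := this.tendsto 0
    simpa [hg] using this
  have hlim : Tendsto (fun t => 2 / Real.sqrt (g t⁻¹)) l (nhds 2) := by
    have h1 : Tendsto (fun t => Real.sqrt (g t⁻¹)) l (nhds 1) := by
      have := (Real.continuous_sqrt.tendsto 1).comp (hgc.comp h)
      rw [Real.sqrt_one] at this
      exact this
    have := (tendsto_const_nhds (x := (2:ℝ)) (f := l)).div h1 one_ne_zero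
    rw [div_one] at this
    exact this
  refine hlim.congr' ?_
  filter_upwards [h0] with t ht
  have ht2 : (0:ℝ) < t ^ 2 := by positivity
  have hP : (0:ℝ) ≤ (1 + (t - r) ^ 2) * (1 + (t + r) ^ 2) := by positivity
  have key : g t⁻¹ = ((1 + (t - r) ^ 2) * (1 + (t + r) ^ 2)) / t ^ 4 := by
    simp only [hg]
    field_simp
  have hs : Real.sqrt (g t⁻¹) = Real.sqrt ((1 + (t - r) ^ 2) * (1 + (t + r) ^ 2)) / t ^ 2 := by
    rw [key, Real.sqrt_div hP]
    congr 1
    rw [show t ^ 4 = (t ^ 2) ^ 2 by ring, Real.sqrt_sq ht2.le]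
  rw [hs, OmegaC]
  rw [div_div_eq_mul_div]
  ring

/-- The unit 2-sphere. -/
abbrev S2 : Type := Metric.sphere (0 : EuclideanSpace ℝ (Fin 3)) 1

theorem stmt_4 (φt : ℝ → ℝ → S2 → ℝ)
    (hcont : ContinuousOn (fun p : ℝ × ℝ × S2 => φt p.1 p.2.1 p.2.2)
      (Set.univ ×ˢ Set.Icc 0 π ×ˢ Set.univ))
    (Cplus Cminus : ℝ)
    (hplus : ∀ ω : S2, φt π 0 ω = Cplus)
    (hminus : ∀ ω : S2, φt (-π) 0 ω = Cminus)
    (φ : ℝ → ℝ → S2 → ℝ)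
    (hφ : ∀ t r ω, 0 < r → φ t r ω = OmegaC t r * φt (tauC t r) (zetaC t r) ω) :
    ∀ (r : ℝ), 0 < r → ∀ ω : S2,
      Tendsto (fun t => t ^ 2 * φ t r ω) atTop (nhds (2 * Cplus)) ∧
      Tendsto (fun t => t ^ 2 * φ t r ω) atBot (nhds (2 * Cminus)) := by
  intro r hr ω
  have hmem : ∀ a : ℝ, (a, (0:ℝ), ω) ∈ ((Set.univ ×ˢ Set.Icc 0 π ×ˢ Set.univ) : Set (ℝ × ℝ × S2)) :=
    fun a => ⟨trivial, ⟨le_refl 0, Real.pi_pos.le⟩, trivial⟩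
  have key : ∀ (l : Filter ℝ) (a : ℝ), Tendsto (fun t => tauC t r) l (nhds a) →
      Tendsto (fun t => zetaC t r) l (nhds 0) →
      Tendsto (fun t : ℝ => t⁻¹) l (nhds 0) → (∀ᶠ t in l, t ≠ 0) →
      Tendsto (fun t => t ^ 2 * φ t r ω) l (nhds (2 * φt a 0 ω)) := by
    intro l a hτ hζ hinv h0
    have hφt : Tendsto (fun t => φt (tauC t r) (zetaC t r) ω) l (nhds (φt a 0 ω)) := by
      have hcw := hcont (a, 0, ω) (hmem a)
      have hmap : Tendsto (fun t => ((tauC t r, zetaC t r, ω) : ℝ × ℝ × S2)) l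
          (nhdsWithin (a, 0, ω) (Set.univ ×ˢ Set.Icc 0 π ×ˢ Set.univ)) := by
        rw [tendsto_nhdsWithin_iff, nhds_prod_eq, nhds_prod_eq]
        exact ⟨hτ.prodMk (hζ.prodMk tendsto_const_nhds),
          Filter.Eventually.of_forall fun t => ⟨trivial, zeta_mem t r hr.le, trivial⟩⟩
      exact Filter.Tendsto.comp hcw hmap
    have h2 := (omega_lim r l hinv h0).mul hφt
    refine h2.congr fun t => ?_
    rw [hφ t r ω hr]; ring
  constructor
  · have := key atTop π (tau_top r) (zeta_top r) tendsto_inv_atTop_zero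
      (eventually_atTop.2 ⟨1, fun t ht => by linarith⟩)
    simpa [hplus ω] using this
  · have hib : Tendsto (fun t : ℝ => t⁻¹) atBot (nhds 0) := by
      have h1 := ((tendsto_inv_atTop_zero (𝕜 := ℝ)).comp tendsto_neg_atBot_atTop).neg
      refine h1.congr' ?_ |>.mono_right (by norm_num)
      exact Filter.Eventually.of_forall fun t => by simp [Function.comp, inv_neg]
    have := key atBot (-π) (tau_bot r) (zeta_bot r) hib
      (eventually_atBot.2 ⟨-1, fun t ht => by linarith⟩)
    simpa [hminus ω] using this
end

section
/- Let φ̃ : ℝ × [0,π] × S² → ℝ be of class C¹, and suppose there are constants C₀ and C₁ such that φ̃(0, π, ω) = C₀ and (∂_τ φ̃)(0, π, ω) = C₁ for all ω ∈ S² (continuity of φ̃ and ∂_τ φ̃ at the spacelike infinity point i⁰, which corresponds to (τ,ζ) = (0,π)). Define φ(t,r,ω) = Ω(t,r) φ̃(τ(t,r), ζ(t,r), ω) on ℝ × (0,∞) × S². Then for every ω ∈ S²: lim_{r→+∞} r² φ(0, r, ω) = 2C₀ and lim_{r→+∞} r⁴ (∂_t φ)(0, r, ω) = 4C₁. -/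
open Real Filter

lemma tauC_zero (r : ℝ) : tauC 0 r = 0 := by
  simp [tauC, Real.arctan_neg]

lemma zetaC_zero (r : ℝ) : zetaC 0 r = 2 * arctan r := by
  simp [zetaC, Real.arctan_neg]; ring

lemma one_add_sq_pos (r : ℝ) : (0:ℝ) < 1 + r ^ 2 := by positivity

lemma OmegaC_zero (r : ℝ) : OmegaC 0 r = 2 / (1 + r ^ 2) := by
  have h : (1 + (0 - r) ^ 2) * (1 + (0 + r) ^ 2) = (1 + r ^ 2) ^ 2 := by ring
  rw [OmegaC, h, Real.sqrt_sq (one_add_sq_pos r).le]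

lemma hasDerivAt_tauC (r : ℝ) :
    HasDerivAt (fun t => tauC t r) (2 / (1 + r ^ 2)) 0 := by
  have h1 : HasDerivAt (fun t : ℝ => t - r) 1 0 := (hasDerivAt_id 0).sub_const r
  have h2 : HasDerivAt (fun t : ℝ => t + r) 1 0 := (hasDerivAt_id 0).add_const r
  have := h1.arctan.add h2.arctan
  refine this.congr_deriv ?_
  simp only [zero_sub, zero_add, neg_sq]
  ring

lemma hasDerivAt_zetaC (r : ℝ) :
    HasDerivAt (fun t => zetaC t r) 0 0 := by
  have h1 : HasDerivAt (fun t : ℝ => t - r) 1 0 := (hasDerivAt_id 0).sub_const r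
  have h2 : HasDerivAt (fun t : ℝ => t + r) 1 0 := (hasDerivAt_id 0).add_const r
  have := h2.arctan.sub h1.arctan
  refine this.congr_deriv ?_
  simp only [zero_sub, zero_add, neg_sq]
  ring

lemma hasDerivAt_u (r : ℝ) :
    HasDerivAt (fun t => (1 + (t - r) ^ 2) * (1 + (t + r) ^ 2)) 0 0 := by
  have h1 : HasDerivAt (fun t : ℝ => 1 + (t - r) ^ 2) (2 * (0 - r) ^ 1 * 1) 0 :=
    (((hasDerivAt_id 0).sub_const r).pow 2).const_add 1
  have h2 : HasDerivAt (fun t : ℝ => 1 + (t + r) ^ 2) (2 * (0 + r) ^ 1 * 1) 0 :=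
    (((hasDerivAt_id 0).add_const r).pow 2).const_add 1
  have := h1.mul h2
  refine this.congr_deriv ?_
  ring

lemma hasDerivAt_OmegaC (r : ℝ) :
    HasDerivAt (fun t => OmegaC t r) 0 0 := by
  have hu0 : (0:ℝ) < (1 + (0 - r) ^ 2) * (1 + (0 + r) ^ 2) := by positivity
  have hs : HasDerivAt (fun t => Real.sqrt ((1 + (t - r) ^ 2) * (1 + (t + r) ^ 2)))
      (0 / (2 * Real.sqrt ((1 + (0 - r) ^ 2) * (1 + (0 + r) ^ 2)))) 0 :=
    (hasDerivAt_u r).sqrt hu0.ne'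
  have hsval : Real.sqrt ((1 + (0 - r) ^ 2) * (1 + (0 + r) ^ 2)) ≠ 0 :=
    (Real.sqrt_pos.mpr hu0).ne'
  have := (hasDerivAt_const (0:ℝ) (2:ℝ)).div hs hsval
  refine this.congr_deriv ?_
  simp

lemma tendsto_ratio : Tendsto (fun r : ℝ => r ^ 2 / (1 + r ^ 2)) atTop (nhds 1) := by
  have h : Tendsto (fun r : ℝ => 1 + r ^ 2) atTop atTop :=
    tendsto_atTop_add_const_left _ _ (tendsto_pow_atTop two_ne_zero)
  have h2 : Tendsto (fun r : ℝ => 1 - (1 + r ^ 2)⁻¹) atTop (nhds 1) := by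
    simpa using tendsto_const_nhds.sub h.inv_tendsto_atTop
  refine h2.congr (fun r => ?_)
  have : (1:ℝ) + r ^ 2 ≠ 0 := (one_add_sq_pos r).ne'
  field_simp
  ring

theorem stmt_5 (φt : ℝ → ℝ → S2 → ℝ)
    (hC1 : ∀ ω : S2, ContDiffOn ℝ 1 (fun p : ℝ × ℝ => φt p.1 p.2 ω)
      (Set.univ ×ˢ Set.Icc 0 π))
    (C0 C1 : ℝ)
    (h0 : ∀ ω : S2, φt 0 π ω = C0)
    (h1 : ∀ ω : S2, deriv (fun τ => φt τ π ω) 0 = C1)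
    (φ : ℝ → ℝ → S2 → ℝ)
    (hφ : ∀ t r ω, 0 < r → φ t r ω = OmegaC t r * φt (tauC t r) (zetaC t r) ω) :
    ∀ ω : S2,
      Tendsto (fun r => r ^ 2 * φ 0 r ω) atTop (nhds (2 * C0)) ∧
      Tendsto (fun r => r ^ 4 * deriv (fun t => φ t r ω) 0) atTop (nhds (4 * C1)) := by
  intro ω
  set s : Set (ℝ × ℝ) := Set.univ ×ˢ Set.Icc 0 π with hs_def
  set F : ℝ × ℝ → ℝ := fun p => φt p.1 p.2 ω with hF_def
  have hF : ContDiffOn ℝ 1 F s := hC1 ω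
  have hsU : UniqueDiffOn ℝ s := uniqueDiffOn_univ.prod (uniqueDiffOn_Icc pi_pos)
  have hπs : ((0:ℝ), π) ∈ s := by
    constructor
    · trivial
    · exact Set.mem_Icc.mpr ⟨pi_pos.le, le_rfl⟩
  -- the path r ↦ (0, 2 arctan r)
  have hmem : ∀ r : ℝ, 0 ≤ r → ((0:ℝ), 2 * arctan r) ∈ s := by
    intro r hr
    refine ⟨trivial, Set.mem_Icc.mpr ⟨?_, ?_⟩⟩ <;>
      simp only
    · have : arctan 0 ≤ arctan r := Real.arctan_strictMono.monotone hr
      rw [Real.arctan_zero] at this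
      linarith
    · have := Real.arctan_lt_pi_div_two r
      linarith
  have hpath : Tendsto (fun r : ℝ => ((0:ℝ), 2 * arctan r)) atTop
      (nhdsWithin ((0:ℝ), π) s) := by
    have h2 : Tendsto (fun r : ℝ => 2 * arctan r) atTop (nhds π) := by
      have h := (Real.tendsto_arctan_atTop.mono_right nhdsWithin_le_nhds).const_mul (2:ℝ)
      have h2 : (2:ℝ) * (π / 2) = π := by ring
      rw [h2] at h
      exact h
    refine tendsto_nhdsWithin_of_tendsto_nhds_of_eventually_within _
      (tendsto_const_nhds.prodMk_nhds h2) ?_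
    filter_upwards [eventually_ge_atTop (0:ℝ)] with r hr using hmem r hr
  -- Part 1
  have hcF : ContinuousWithinAt F s ((0:ℝ), π) := hF.continuousOn _ hπs
  have hFlim : Tendsto (fun r : ℝ => F ((0:ℝ), 2 * arctan r)) atTop (nhds C0) := by
    have := hcF.tendsto.comp hpath
    simpa [hF_def, h0 ω, Function.comp_def] using this
  have part1 : Tendsto (fun r => r ^ 2 * φ 0 r ω) atTop (nhds (2 * C0)) := by
    have hlim : Tendsto (fun r : ℝ => 2 * (r ^ 2 / (1 + r ^ 2)) * F ((0:ℝ), 2 * arctan r))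
        atTop (nhds (2 * C0)) := by
      have := ((tendsto_ratio.const_mul 2).mul hFlim)
      simpa [mul_assoc] using this
    refine hlim.congr' ?_
    filter_upwards [eventually_gt_atTop (0:ℝ)] with r hr
    rw [hφ 0 r ω hr, tauC_zero, zetaC_zero, OmegaC_zero]
    have : (1:ℝ) + r ^ 2 ≠ 0 := (one_add_sq_pos r).ne'
    field_simp [hF_def]
    ring
  -- Part 2: compute the t-derivative at 0 for r > 0
  have hcont' : ContinuousOn (fderivWithin ℝ F s) s :=
    hF.continuousOn_fderivWithin hsU le_rfl
  -- the value of the limit derivative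
  have hL : (fderivWithin ℝ F s ((0:ℝ), π)) (1, 0) = C1 := by
    have hdF : HasFDerivWithinAt F (fderivWithin ℝ F s ((0:ℝ), π)) s ((0:ℝ), π) :=
      ((hF.differentiableOn one_ne_zero) _ hπs).hasFDerivWithinAt
    have hg : HasDerivWithinAt (fun τ : ℝ => (τ, π)) ((1:ℝ), (0:ℝ)) Set.univ 0 :=
      ((hasDerivAt_id (0:ℝ)).prodMk (hasDerivAt_const 0 π)).hasDerivWithinAt
    have hmaps : Set.MapsTo (fun τ : ℝ => (τ, π)) Set.univ s := fun τ _ =>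
      ⟨trivial, Set.mem_Icc.mpr ⟨pi_pos.le, le_rfl⟩⟩
    have := (hdF.comp_hasDerivWithinAt 0 hg hmaps)
    rw [hasDerivWithinAt_univ] at this
    have := this.deriv
    rw [← h1 ω, ← this]
    rfl
  set G : ℝ × ℝ → ℝ := fun p => fderivWithin ℝ F s p (1, 0) with hG_def
  have hGlim : Tendsto (fun r : ℝ => G ((0:ℝ), 2 * arctan r)) atTop (nhds C1) := by
    have hGc : ContinuousWithinAt G s ((0:ℝ), π) := by
      have happ : Continuous fun A : (ℝ × ℝ) →L[ℝ] ℝ => A ((1:ℝ), (0:ℝ)) :=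
        (ContinuousLinearMap.apply ℝ ℝ ((1:ℝ), (0:ℝ))).continuous
      exact happ.continuousAt.comp_continuousWithinAt (hcont'.continuousWithinAt hπs)
    have := hGc.tendsto.comp hpath
    simpa [hG_def, hL, Function.comp_def] using this
  -- exact formula for the derivative
  have hderiv : ∀ r : ℝ, 0 < r →
      deriv (fun t => φ t r ω) 0
        = (2 / (1 + r ^ 2)) * ((2 / (1 + r ^ 2)) * G ((0:ℝ), 2 * arctan r)) := by
    intro r hr
    have hζ : zetaC 0 r ∈ Set.Ioo (0:ℝ) π := by
      rw [zetaC_zero]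
      constructor
      · have : arctan 0 < arctan r := Real.arctan_strictMono hr
        rw [Real.arctan_zero] at this
        linarith
      · have := Real.arctan_lt_pi_div_two r
        linarith
    have hp : (tauC 0 r, zetaC 0 r) ∈ s := ⟨trivial, Set.mem_Icc.mpr ⟨hζ.1.le, hζ.2.le⟩⟩
    have hnhds : s ∈ nhds (tauC 0 r, zetaC 0 r) := by
      have : Set.univ ×ˢ Set.Ioo (0:ℝ) π ∈ nhds (tauC 0 r, zetaC 0 r) :=
        (isOpen_univ.prod isOpen_Ioo).mem_nhds ⟨trivial, hζ⟩
      exact Filter.mem_of_superset this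
        (Set.prod_mono le_rfl Set.Ioo_subset_Icc_self)
    have hFd : HasFDerivAt F (fderiv ℝ F (tauC 0 r, zetaC 0 r)) (tauC 0 r, zetaC 0 r) :=
      (((hF.contDiffAt hnhds).differentiableAt one_ne_zero)).hasFDerivAt
    have hgd : HasDerivAt (fun t : ℝ => (tauC t r, zetaC t r))
        ((2 / (1 + r ^ 2), 0)) 0 := (hasDerivAt_tauC r).prodMk (hasDerivAt_zetaC r)
    have hcomp : HasDerivAt (fun t : ℝ => F (tauC t r, zetaC t r))
        (fderiv ℝ F (tauC 0 r, zetaC 0 r) (2 / (1 + r ^ 2), 0)) 0 :=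
      hFd.comp_hasDerivAt (f := fun t : ℝ => (tauC t r, zetaC t r)) 0 hgd
    have hprod : HasDerivAt (fun t : ℝ => OmegaC t r * F (tauC t r, zetaC t r))
        (0 * F (tauC 0 r, zetaC 0 r)
          + OmegaC 0 r * fderiv ℝ F (tauC 0 r, zetaC 0 r) (2 / (1 + r ^ 2), 0)) 0 :=
      (hasDerivAt_OmegaC r).mul hcomp
    have hfun : (fun t => φ t r ω) = fun t : ℝ => OmegaC t r * F (tauC t r, zetaC t r) := by
      funext t
      exact hφ t r ω hr
    rw [hfun, hprod.deriv, zero_mul, zero_add, OmegaC_zero]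
    congr 1
    have heval : fderiv ℝ F (tauC 0 r, zetaC 0 r) (2 / (1 + r ^ 2), 0)
        = (2 / (1 + r ^ 2)) * fderiv ℝ F (tauC 0 r, zetaC 0 r) (1, 0) := by
      have : ((2 / (1 + r ^ 2) : ℝ), (0:ℝ)) = (2 / (1 + r ^ 2)) • ((1:ℝ), (0:ℝ)) := by
        simp
      rw [this, map_smul, smul_eq_mul]
    rw [heval]
    have hGval : G ((0:ℝ), 2 * arctan r) = fderiv ℝ F (tauC 0 r, zetaC 0 r) (1, 0) := by
      rw [hG_def]
      simp only
      rw [tauC_zero, zetaC_zero] at hnhds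
      rw [fderivWithin_of_mem_nhds hnhds, tauC_zero, zetaC_zero]
    rw [hGval]
  -- conclude
  have part2 : Tendsto (fun r => r ^ 4 * deriv (fun t => φ t r ω) 0) atTop (nhds (4 * C1)) := by
    have hlim : Tendsto (fun r : ℝ => 4 * (r ^ 2 / (1 + r ^ 2)) ^ 2 * G ((0:ℝ), 2 * arctan r))
        atTop (nhds (4 * C1)) := by
      have h4 : Tendsto (fun r : ℝ => 4 * (r ^ 2 / (1 + r ^ 2)) ^ 2) atTop (nhds 4) := by
        have := (tendsto_ratio.pow 2).const_mul (4:ℝ)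
        simpa using this
      simpa [mul_assoc] using h4.mul hGlim
    refine hlim.congr' ?_
    filter_upwards [eventually_gt_atTop (0:ℝ)] with r hr
    rw [hderiv r hr]
    have : (1:ℝ) + r ^ 2 ≠ 0 := (one_add_sq_pos r).ne'
    field_simp
    ring
  exact ⟨part1, part2⟩
end
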